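/- If f is a continuous map on a metric space X and the induced system (2^X, f_*) is topologically transitive, then (X, f) is weak mixing. -/

import Mathlib

open TopologicalSpace

section Aux

variable {X : Type*} [MetricSpace X]

lemma aux_isOpen_sub {U : Set X} (hU : IsOpen U) :
    IsOpen {A : NonemptyCompacts X | (A : Set X) ⊆ U} := by
  rw [EMetric.isOpen_iff]
  intro A hA
  obtain ⟨δ, δpos, hδ⟩ := A.isCompact.exists_thickening_subset_open hU hA
  refine ⟨ENNReal.ofReal δ, ENNReal.ofReal_pos.2 δpos, ?_⟩
  intro B hB x hx
  rw [EMetric.mem_ball] at hB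
  have hBA : EMetric.hausdorffEdist (B : Set X) (A : Set X) < ENNReal.ofReal δ := hB
  obtain ⟨y, hy, hxy⟩ := EMetric.exists_edist_lt_of_hausdorffEdist_lt hx hBA
  exact hδ (Metric.mem_thickening_iff_infEdist_lt.2
    (lt_of_le_of_lt (EMetric.infEdist_le_edist_of_mem hy) hxy))

lemma aux_isOpen_hit {V : Set X} (hV : IsOpen V) :
    IsOpen {A : NonemptyCompacts X | ((A : Set X) ∩ V).Nonempty} := by
  rw [EMetric.isOpen_iff]
  intro A ⟨x, hxA, hxV⟩
  obtain ⟨ε, εpos, hε⟩ := EMetric.isOpen_iff.1 hV x hxV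
  refine ⟨ε, εpos, ?_⟩
  intro B hB
  rw [EMetric.mem_ball] at hB
  have hAB : EMetric.hausdorffEdist (A : Set X) (B : Set X) < ε := by
    exact (Metric.hausdorffEDist_comm (s := (A : Set X)) (t := B)).trans_lt hB
  obtain ⟨y, hy, hxy⟩ := EMetric.exists_edist_lt_of_hausdorffEdist_lt hxA hAB
  exact ⟨y, hy, hε (by rwa [EMetric.mem_ball, edist_comm])⟩

/-- A singleton as a nonempty compact set. -/
def auxSingleton (x : X) : NonemptyCompacts X :=
  ⟨⟨{x}, isCompact_singleton⟩, Set.singleton_nonempty x⟩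

/-- A pair as a nonempty compact set. -/
def auxPair (x y : X) : NonemptyCompacts X :=
  ⟨⟨{x, y}, (Set.toFinite {x, y}).isCompact⟩, ⟨x, by simp⟩⟩

end Aux

/-- If the induced system `(2^X, f_*)` is topologically transitive then `(X,f)` is weak
mixing. -/
theorem stmt_14 (X : Type*) [MetricSpace X] (f : X → X) (hf : Continuous f)
    (F : NonemptyCompacts X → NonemptyCompacts X)
    (hF : ∀ A : NonemptyCompacts X, (F A : Set X) = f '' (A : Set X))
    (htrans : ∀ U V : Set (NonemptyCompacts X), IsOpen U → U.Nonempty →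
      IsOpen V → V.Nonempty → ∃ n : ℕ, (U ∩ F^[n] ⁻¹' V).Nonempty) :
    ∀ U V : Set (X × X), IsOpen U → U.Nonempty → IsOpen V → V.Nonempty →
      ∃ n : ℕ, (U ∩ (Prod.map f f)^[n] ⁻¹' V).Nonempty := by
  -- iterated images
  have hFn : ∀ (n : ℕ) (A : NonemptyCompacts X), (F^[n] A : Set X) = f^[n] '' (A : Set X) := by
    intro n
    induction n with
    | zero => intro A; simp
    | succ n ih =>
      intro A
      rw [Function.iterate_succ_apply, ih, hF, Set.image_image, Function.iterate_succ]
      rfl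
  -- R : common source, two targets
  have R : ∀ U V₁ V₂ : Set X, IsOpen U → U.Nonempty → IsOpen V₁ → V₁.Nonempty →
      IsOpen V₂ → V₂.Nonempty →
      ∃ n : ℕ, (U ∩ f^[n] ⁻¹' V₁).Nonempty ∧ (U ∩ f^[n] ⁻¹' V₂).Nonempty := by
    intro U V₁ V₂ hU ⟨u, hu⟩ hV₁ ⟨v₁, hv₁⟩ hV₂ ⟨v₂, hv₂⟩
    obtain ⟨n, A, hA𝒰, hA𝒱⟩ := htrans {A : NonemptyCompacts X | (A : Set X) ⊆ U}
      ({A : NonemptyCompacts X | ((A : Set X) ∩ V₁).Nonempty} ∩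
        {A : NonemptyCompacts X | ((A : Set X) ∩ V₂).Nonempty})
      (aux_isOpen_sub hU) ⟨auxSingleton u, by simpa [auxSingleton] using hu⟩
      ((aux_isOpen_hit hV₁).inter (aux_isOpen_hit hV₂))
      ⟨auxPair v₁ v₂, ⟨v₁, by show v₁ ∈ ({v₁, v₂} : Set X); simp, hv₁⟩, ⟨v₂, by show v₂ ∈ ({v₁, v₂} : Set X); simp, hv₂⟩⟩
    rw [Set.mem_preimage, Set.mem_inter_iff, Set.mem_setOf_eq, Set.mem_setOf_eq,
      hFn n A] at hA𝒱
    obtain ⟨⟨_, ⟨x, hxA, rfl⟩, hx1⟩, ⟨_, ⟨y, hyA, rfl⟩, hy2⟩⟩ := hA𝒱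
    exact ⟨n, ⟨x, hA𝒰 hxA, hx1⟩, ⟨y, hA𝒰 hyA, hy2⟩⟩
  -- Q : two sources, common target
  have Q : ∀ U₁ U₂ C : Set X, IsOpen U₁ → U₁.Nonempty → IsOpen U₂ → U₂.Nonempty →
      IsOpen C → C.Nonempty →
      ∃ n : ℕ, (U₁ ∩ f^[n] ⁻¹' C).Nonempty ∧ (U₂ ∩ f^[n] ⁻¹' C).Nonempty := by
    intro U₁ U₂ C hU₁ ⟨u₁, hu₁⟩ hU₂ ⟨u₂, hu₂⟩ hC ⟨c, hc⟩
    obtain ⟨n, A, hA𝒰, hA𝒱⟩ := htrans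
      ({A : NonemptyCompacts X | ((A : Set X) ∩ U₁).Nonempty} ∩
        {A : NonemptyCompacts X | ((A : Set X) ∩ U₂).Nonempty})
      {A : NonemptyCompacts X | (A : Set X) ⊆ C}
      ((aux_isOpen_hit hU₁).inter (aux_isOpen_hit hU₂))
      ⟨auxPair u₁ u₂, ⟨u₁, by show u₁ ∈ ({u₁, u₂} : Set X); simp, hu₁⟩, ⟨u₂, by show u₂ ∈ ({u₁, u₂} : Set X); simp, hu₂⟩⟩
      (aux_isOpen_sub hC) ⟨auxSingleton c, by simpa [auxSingleton] using hc⟩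
    rw [Set.mem_preimage, Set.mem_setOf_eq, hFn n A] at hA𝒱
    obtain ⟨⟨x, hxA, hx1⟩, ⟨y, hyA, hy2⟩⟩ := hA𝒰
    exact ⟨n, ⟨x, hx1, hA𝒱 ⟨x, hxA, rfl⟩⟩, ⟨y, hy2, hA𝒱 ⟨y, hyA, rfl⟩⟩⟩
  -- main argument
  intro U V hU ⟨⟨a, b⟩, hab⟩ hV ⟨⟨c, d⟩, hcd⟩
  obtain ⟨U₁, U₂, hU₁, hU₂, haU₁, hbU₂, hUsub⟩ := isOpen_prod_iff.1 hU a b hab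
  obtain ⟨V₁, V₂, hV₁, hV₂, hcV₁, hdV₂, hVsub⟩ := isOpen_prod_iff.1 hV c d hcd
  -- step 1: n with V₁ ∩ f^[n]⁻¹ V₂ ≠ ∅ and V₁ ∩ f^[n]⁻¹ U₂ ≠ ∅
  obtain ⟨n, hC, hD⟩ := R V₁ V₂ U₂ hV₁ ⟨c, hcV₁⟩ hV₂ ⟨d, hdV₂⟩ hU₂ ⟨b, hbU₂⟩
  set C : Set X := V₁ ∩ f^[n] ⁻¹' V₂ with hCdef
  have hCopen : IsOpen C := hV₁.inter ((hf.iterate n).isOpen_preimage _ hV₂)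
  set D : Set X := f^[n] ⁻¹' U₂ with hDdef
  have hDopen : IsOpen D := (hf.iterate n).isOpen_preimage _ hU₂
  have hDne : D.Nonempty := hD.mono Set.inter_subset_right
  -- step 2: m with U₁ ∩ f^[m]⁻¹ C ≠ ∅ and D ∩ f^[m]⁻¹ C ≠ ∅
  obtain ⟨m, ⟨x, hxU₁, hxC⟩, ⟨z, hzD, hzC⟩⟩ :=
    Q U₁ D C hU₁ ⟨a, haU₁⟩ hDopen hDne hCopen hC
  refine ⟨m, ⟨(x, f^[n] z), hUsub ⟨hxU₁, hzD⟩, ?_⟩⟩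
  rw [Set.mem_preimage, Prod.map_iterate]
  refine hVsub ⟨(hxC : f^[m] x ∈ C).1, ?_⟩
  have hz2 : f^[n] (f^[m] z) ∈ V₂ := (hzC : f^[m] z ∈ C).2
  have hcomm : f^[m] (f^[n] z) = f^[n] (f^[m] z) := by
    rw [← Function.iterate_add_apply, ← Function.iterate_add_apply, Nat.add_comm]
  show f^[m] (f^[n] z) ∈ V₂
  rw [hcomm]
  exact hz2
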